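/- Let g(x) = φ(x)(φ(x) - x·Φ(-x)) where φ and Φ are the standard normal density and CDF. For any ξ ≥ 0 and any β ∈ [0, π/2), the integral L(β) := ∫_0^∞ φ(x)(Φ(ξ + x·tan β) - Φ(ξ - x·tan β)) dx satisfies L(β) ≥ 2·g(ξ)·sin β·cos β. -/

import Mathlib

open MeasureTheory Real Set Filter Topology

noncomputable def stdPhi (x : ℝ) : ℝ := Real.exp (-x ^ 2 / 2) / Real.sqrt (2 * Real.pi)

noncomputable def stdCdf (x : ℝ) : ℝ := ∫ t in Set.Iic x, stdPhi t

noncomputable def gFun (x : ℝ) : ℝ := stdPhi x * (stdPhi x - x * stdCdf (-x))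

lemma stdPhi_eq (x : ℝ) : stdPhi x = Real.exp (-(1/2) * x ^ 2) / Real.sqrt (2 * Real.pi) := by
  unfold stdPhi; ring_nf

lemma stdPhi_pos (x : ℝ) : 0 < stdPhi x :=
  div_pos (exp_pos _) (Real.sqrt_pos.2 (by positivity))

lemma stdPhi_nonneg (x : ℝ) : 0 ≤ stdPhi x := (stdPhi_pos x).le

lemma continuous_stdPhi : Continuous stdPhi := by
  unfold stdPhi; fun_prop

lemma integrable_stdPhi : Integrable stdPhi := by
  rw [show stdPhi = _ from funext stdPhi_eq]
  exact (integrable_exp_neg_mul_sq (by norm_num : (0:ℝ) < 1/2)).div_const _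

lemma integrable_mul_stdPhi : Integrable (fun x => x * stdPhi x) := by
  simp only [stdPhi_eq]
  have := (integrable_mul_exp_neg_mul_sq (by norm_num : (0:ℝ) < 1/2)).div_const
    (Real.sqrt (2 * Real.pi))
  exact this.congr (by filter_upwards with x; ring)

lemma stdPhi_even (x : ℝ) : stdPhi (-x) = stdPhi x := by unfold stdPhi; ring_nf

lemma stdPhi_le {a b : ℝ} (h : b ^ 2 ≤ a ^ 2) : stdPhi a ≤ stdPhi b := by
  unfold stdPhi
  gcongr

lemma hasDerivAt_stdPhi (x : ℝ) : HasDerivAt stdPhi (-x * stdPhi x) x := by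
  have h1 : HasDerivAt (fun x : ℝ => -x ^ 2 / 2) (-x) x := by
    have := ((hasDerivAt_pow 2 x).neg).div_const 2
    simpa using this.congr_deriv (by ring)
  have h2 := (Real.hasDerivAt_exp (-x ^ 2 / 2)).comp x h1
  have h3 := h2.div_const (Real.sqrt (2 * Real.pi))
  exact h3.congr_deriv (by unfold stdPhi; ring)

lemma stdCdf_nonneg (x : ℝ) : 0 ≤ stdCdf x :=
  setIntegral_nonneg measurableSet_Iic fun t _ => stdPhi_nonneg t

lemma stdCdf_mono : Monotone stdCdf := fun a b hab =>
  setIntegral_mono_set integrable_stdPhi.integrableOn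
    (Eventually.of_forall fun t => stdPhi_nonneg t)
    (HasSubset.Subset.eventuallyLE (Iic_subset_Iic.2 hab))

lemma measurable_stdCdf : Measurable stdCdf := stdCdf_mono.measurable

lemma stdCdf_sub {a b : ℝ} (hab : a ≤ b) :
    stdCdf b - stdCdf a = ∫ t in Set.Ioc a b, stdPhi t := by
  unfold stdCdf
  rw [intervalIntegral.integral_Iic_sub_Iic integrable_stdPhi.integrableOn
    integrable_stdPhi.integrableOn, intervalIntegral.integral_of_le hab]

lemma hasDerivAt_stdCdf (x : ℝ) : HasDerivAt stdCdf (stdPhi x) x := by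
  have heq : stdCdf = fun u => stdCdf 0 + ∫ t in (0:ℝ)..u, stdPhi t := by
    funext u
    rw [← intervalIntegral.integral_Iic_sub_Iic integrable_stdPhi.integrableOn
      integrable_stdPhi.integrableOn]
    unfold stdCdf; ring
  rw [heq]
  have := intervalIntegral.integral_hasDerivAt_right (a := 0) (b := x)
    (integrable_stdPhi.intervalIntegrable)
    (continuous_stdPhi.stronglyMeasurableAtFilter _ _)
    continuous_stdPhi.continuousAt
  exact HasDerivAt.const_add _ this

lemma tendsto_stdPhi_atTop : Tendsto stdPhi atTop (𝓝 0) := by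
  have h1 : Tendsto (fun x : ℝ => -x ^ 2 / 2) atTop atBot := by
    have h0 : Tendsto (fun x : ℝ => -x ^ 2) atTop atBot := by
      simpa [Function.comp_def] using
        tendsto_neg_atTop_atBot.comp (tendsto_pow_atTop (two_ne_zero))
    exact h0.atBot_div_const (by norm_num)
  have h2 := (Real.tendsto_exp_atBot.comp h1).div_const (Real.sqrt (2 * Real.pi))
  simp only [Function.comp_def, zero_div] at h2; exact h2

lemma stdPhi_le_max (x : ℝ) : stdPhi x ≤ stdPhi 0 := stdPhi_le (by simpa using sq_nonneg x)

lemma integral_comp_add_right_Ioi (f : ℝ → ℝ) (a d : ℝ) :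
    ∫ x in Ioi a, f (x + d) = ∫ x in Ioi (a + d), f x := by
  have A : MeasurableEmbedding (fun x : ℝ => x + d) :=
    (Homeomorph.addRight d).isClosedEmbedding.measurableEmbedding
  have := A.setIntegral_map (μ := volume) f (Ioi (a + d))
  rw [map_add_right_eq_self] at this
  have hpre : (fun x : ℝ => x + d) ⁻¹' Ioi (a + d) = Ioi a := by
    ext x
    simp only [Set.mem_preimage, Set.mem_Ioi]
    constructor <;> intro h <;> linarith
  rw [hpre] at this
  exact this.symm

lemma stdCdf_neg (x : ℝ) : stdCdf (-x) = ∫ t in Ioi x, stdPhi t := by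
  unfold stdCdf
  have h : ∫ t in Ioi x, stdPhi t = ∫ t in Ioi x, stdPhi (-t) := by
    simp [stdPhi_even]
  rw [h, integral_comp_neg_Ioi]

lemma integral_stdPhi : ∫ x, stdPhi x = 1 := by
  have : ∫ x, stdPhi x = (∫ x, Real.exp (-(1/2) * x ^ 2)) / Real.sqrt (2 * Real.pi) := by
    rw [← integral_div]
    congr 1; funext x; unfold stdPhi; ring_nf
  rw [this, integral_gaussian]
  rw [show (π / (1/2)) = 2 * π by ring]
  rw [div_self (by positivity)]

lemma stdCdf_le_one (x : ℝ) : stdCdf x ≤ 1 := by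
  rw [← integral_stdPhi]
  exact setIntegral_le_integral integrable_stdPhi
    (Eventually.of_forall fun t => stdPhi_nonneg t)

/-- `∫_{Ioi a} x φ(x) dx = φ(a)` -/
lemma integral_mul_stdPhi_Ioi (a : ℝ) :
    ∫ x in Ioi a, x * stdPhi x = stdPhi a := by
  have hderiv : ∀ x ∈ Ici a, HasDerivAt (fun y => -stdPhi y) (x * stdPhi x) x := by
    intro x _
    exact (hasDerivAt_stdPhi x).neg.congr_deriv (by ring)
  have htt : Tendsto (fun y => -stdPhi y) atTop (𝓝 0) := by
    simpa using tendsto_stdPhi_atTop.neg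
  have := integral_Ioi_of_hasDerivAt_of_tendsto' hderiv
    (integrable_mul_stdPhi.integrableOn) htt
  simpa using this

lemma mills {x : ℝ} (hx : 0 ≤ x) : x * stdCdf (-x) ≤ stdPhi x := by
  rw [stdCdf_neg, ← integral_mul_stdPhi_Ioi x, ← integral_const_mul]
  apply setIntegral_mono_on (integrable_stdPhi.integrableOn.const_mul x)
    (integrable_mul_stdPhi.integrableOn) measurableSet_Ioi
  intro y hy
  have : x ≤ y := le_of_lt hy
  exact mul_le_mul_of_nonneg_right this (stdPhi_nonneg y)

lemma antitone_millsF : Antitone (fun u => stdPhi u - u * stdCdf (-u)) := by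
  have hd : ∀ u : ℝ, HasDerivAt (fun u => stdPhi u - u * stdCdf (-u)) (-stdCdf (-u)) u := by
    intro u
    have h2 : HasDerivAt (fun u : ℝ => stdCdf (-u)) (-stdPhi u) u := by
      have := (hasDerivAt_stdCdf (-u)).comp u (hasDerivAt_neg u)
      simpa [stdPhi_even, Function.comp_def] using this
    have h3 := (hasDerivAt_id u).mul h2
    have h4 := (hasDerivAt_stdPhi u).sub h3
    exact h4.congr_deriv (by simp only [one_mul, id_eq]; ring)
  apply antitone_of_deriv_nonpos
  · exact fun u => (hd u).differentiableAt
  · intro u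
    rw [(hd u).deriv]
    simpa using stdCdf_nonneg (-u)

lemma millsF_nonneg {u : ℝ} (hu : 0 ≤ u) : 0 ≤ stdPhi u - u * stdCdf (-u) :=
  sub_nonneg.2 (mills hu)

section Main
variable {ξ t s c : ℝ}

lemma prod_identity (hs : s = t * c) (h1 : c ^ 2 * (1 + t ^ 2) = 1) (hc : 0 < c) (x : ℝ) :
    stdPhi x * stdPhi (ξ + x * t) = stdPhi (ξ * c) * stdPhi (x / c + ξ * s) := by
  unfold stdPhi
  rw [div_mul_div_comm, div_mul_div_comm, ← Real.exp_add, ← Real.exp_add]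
  congr 2
  subst hs
  field_simp
  ring_nf
  linear_combination (ξ ^ 2 * c ^ 2 - x ^ 2) * h1

lemma integrableF (ξ t : ℝ) : Integrable (fun x => stdPhi x * stdPhi (ξ + x * t)) := by
  apply Integrable.mono' (integrable_stdPhi.mul_const (stdPhi 0))
  · exact (continuous_stdPhi.mul (continuous_stdPhi.comp (by fun_prop))).aestronglyMeasurable
  · filter_upwards with x
    rw [Real.norm_eq_abs,
      abs_of_nonneg (mul_nonneg (stdPhi_nonneg _) (stdPhi_nonneg _))]
    exact mul_le_mul_of_nonneg_left (stdPhi_le_max _) (stdPhi_nonneg x)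

lemma integrable_xF (ξ t : ℝ) :
    Integrable (fun x => x * (stdPhi x * stdPhi (ξ + x * t))) := by
  have hg : Integrable (fun x => |x| * (stdPhi x * stdPhi 0)) := by
    apply (integrable_mul_stdPhi.abs.mul_const (stdPhi 0)).congr
    filter_upwards with x
    rw [abs_mul, abs_of_nonneg (stdPhi_nonneg _), mul_assoc]
  apply Integrable.mono' hg
  · apply Continuous.aestronglyMeasurable
    exact continuous_id.mul (continuous_stdPhi.mul (continuous_stdPhi.comp (by fun_prop)))
  · filter_upwards with x
    rw [Real.norm_eq_abs, abs_mul,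
      abs_of_nonneg (mul_nonneg (stdPhi_nonneg _) (stdPhi_nonneg _))]
    exact mul_le_mul_of_nonneg_left
      (mul_le_mul_of_nonneg_left (stdPhi_le_max _) (stdPhi_nonneg _)) (abs_nonneg _)

lemma tendsto_F_atTop (ξ t : ℝ) :
    Tendsto (fun x => stdPhi x * stdPhi (ξ + x * t)) atTop (𝓝 0) := by
  apply squeeze_zero (fun x => mul_nonneg (stdPhi_nonneg _) (stdPhi_nonneg _))
    (g := fun x => stdPhi x * stdPhi 0)
    (fun x => mul_le_mul_of_nonneg_left (stdPhi_le_max _) (stdPhi_nonneg x))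
  simpa using tendsto_stdPhi_atTop.mul_const (stdPhi 0)

lemma ibp (hξ : 0 ≤ ξ) (ht : 0 ≤ t) :
    ∫ x in Ioi (0:ℝ), ((1 + t ^ 2) * x + ξ * t) * (stdPhi x * stdPhi (ξ + x * t))
      = stdPhi 0 * stdPhi ξ := by
  have hderiv : ∀ x ∈ Ici (0:ℝ),
      HasDerivAt (fun x => -(stdPhi x * stdPhi (ξ + x * t)))
        (((1 + t ^ 2) * x + ξ * t) * (stdPhi x * stdPhi (ξ + x * t))) x := by
    intro x _
    have hlin : HasDerivAt (fun x : ℝ => ξ + x * t) t x := by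
      simpa using ((hasDerivAt_id x).mul_const t).const_add ξ
    have hcomp := (hasDerivAt_stdPhi (ξ + x * t)).comp x hlin
    have hprod := (hasDerivAt_stdPhi x).mul hcomp
    exact hprod.neg.congr_deriv (by simp only [Function.comp_def]; ring)
  have hint : IntegrableOn
      (fun x => ((1 + t ^ 2) * x + ξ * t) * (stdPhi x * stdPhi (ξ + x * t))) (Ioi 0) := by
    have : Integrable
        (fun x => ((1 + t ^ 2) * x + ξ * t) * (stdPhi x * stdPhi (ξ + x * t))) := by
      have := ((integrable_xF ξ t).const_mul (1 + t ^ 2)).add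
        ((integrableF ξ t).const_mul (ξ * t))
      exact this.congr (by filter_upwards with x; simp only [Pi.add_apply]; ring)
    exact this.integrableOn
  have htt : Tendsto (fun x => -(stdPhi x * stdPhi (ξ + x * t))) atTop (𝓝 0) := by
    simpa using (tendsto_F_atTop ξ t).neg
  have := integral_Ioi_of_hasDerivAt_of_tendsto' hderiv hint htt
  simpa using this

lemma subst_integral (hc : 0 < c) (d : ℝ) :
    ∫ x in Ioi (0:ℝ), stdPhi (x / c + d) = c * stdCdf (-d) := by
  have h1 := integral_comp_mul_left_Ioi (fun u => stdPhi (u + d)) 0 (inv_pos.2 hc)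
  simp only [mul_zero, inv_inv, smul_eq_mul] at h1
  rw [integral_comp_add_right_Ioi, zero_add] at h1
  rw [stdCdf_neg]
  rw [← h1]
  congr 1
  funext x
  rw [div_eq_inv_mul]

lemma exact_value (hs : s = t * c) (h1 : c ^ 2 * (1 + t ^ 2) = 1) (hc : 0 < c)
    (hξ : 0 ≤ ξ) (ht : 0 ≤ t) :
    ∫ x in Ioi (0:ℝ), 2 * t * x * (stdPhi x * stdPhi (ξ + x * t))
      = 2 * t * c ^ 2 * (stdPhi 0 * stdPhi ξ)
        - 2 * ξ * t ^ 2 * c ^ 3 * (stdPhi (ξ * c) * stdCdf (-(ξ * s))) := by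
  have hF : ∫ x in Ioi (0:ℝ), stdPhi x * stdPhi (ξ + x * t)
      = stdPhi (ξ * c) * (c * stdCdf (-(ξ * s))) := by
    rw [show (fun x => stdPhi x * stdPhi (ξ + x * t))
        = fun x => stdPhi (ξ * c) * stdPhi (x / c + ξ * s) from
      funext (prod_identity hs h1 hc)]
    rw [integral_const_mul, subst_integral hc]
  have hibp := ibp hξ ht
  have hsplit : ∫ x in Ioi (0:ℝ), ((1 + t ^ 2) * x + ξ * t) * (stdPhi x * stdPhi (ξ + x * t))
      = (1 + t ^ 2) * (∫ x in Ioi (0:ℝ), x * (stdPhi x * stdPhi (ξ + x * t)))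
        + (ξ * t) * ∫ x in Ioi (0:ℝ), stdPhi x * stdPhi (ξ + x * t) := by
    rw [← integral_const_mul, ← integral_const_mul, ← integral_add
      ((integrable_xF ξ t).integrableOn.const_mul _)
      ((integrableF ξ t).integrableOn.const_mul _)]
    congr 1; funext x; ring
  have h2t : ∫ x in Ioi (0:ℝ), 2 * t * x * (stdPhi x * stdPhi (ξ + x * t))
      = 2 * t * ∫ x in Ioi (0:ℝ), x * (stdPhi x * stdPhi (ξ + x * t)) := by
    rw [← integral_const_mul]
    congr 1; funext x; ring
  rw [h2t]
  have hx : ∫ x in Ioi (0:ℝ), x * (stdPhi x * stdPhi (ξ + x * t))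
      = c ^ 2 * (stdPhi 0 * stdPhi ξ - ξ * t * (stdPhi (ξ * c) * (c * stdCdf (-(ξ * s))))) := by
    have h1t : (1 + t ^ 2) ≠ 0 := by positivity
    have hc2 : c ^ 2 = (1 + t ^ 2)⁻¹ := by
      field_simp
      linarith [h1]
    rw [hsplit, hF] at hibp
    rw [hc2]
    rw [eq_inv_mul_iff_mul_eq₀ h1t]
    linarith [hibp]
  rw [hx]
  ring

end Main

lemma pointwise_bound {ξ t : ℝ} (hξ : 0 ≤ ξ) (ht : 0 ≤ t) {x : ℝ} (hx : 0 < x) :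
    2 * t * x * (stdPhi x * stdPhi (ξ + x * t))
      ≤ stdPhi x * (stdCdf (ξ + x * t) - stdCdf (ξ - x * t)) := by
  have hab : ξ - x * t ≤ ξ + x * t := by nlinarith
  have key : 2 * t * x * stdPhi (ξ + x * t) ≤ stdCdf (ξ + x * t) - stdCdf (ξ - x * t) := by
    rw [stdCdf_sub hab]
    have hconst : ∫ _ in Ioc (ξ - x * t) (ξ + x * t), stdPhi (ξ + x * t)
        = 2 * t * x * stdPhi (ξ + x * t) := by
      rw [setIntegral_const, Real.volume_real_Ioc_of_le (by linarith),
        smul_eq_mul]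
      ring
    rw [← hconst]
    apply setIntegral_mono_on
    · exact integrableOn_const (by rw [Real.volume_Ioc]; exact ENNReal.ofReal_ne_top)
    · exact integrable_stdPhi.integrableOn
    · exact measurableSet_Ioc
    · intro y hy
      apply stdPhi_le
      have h2 : -(ξ + x * t) ≤ y := by have := hy.1; nlinarith
      exact sq_le_sq' h2 hy.2
  calc 2 * t * x * (stdPhi x * stdPhi (ξ + x * t))
      = stdPhi x * (2 * t * x * stdPhi (ξ + x * t)) := by ring
    _ ≤ stdPhi x * (stdCdf (ξ + x * t) - stdCdf (ξ - x * t)) :=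
        mul_le_mul_of_nonneg_left key (stdPhi_nonneg x)

lemma integrable_big (ξ t : ℝ) :
    IntegrableOn (fun x => stdPhi x * (stdCdf (ξ + x * t) - stdCdf (ξ - x * t))) (Ioi 0) := by
  apply Integrable.integrableOn
  apply Integrable.mono' (integrable_stdPhi.mul_const 1)
  · apply Measurable.aestronglyMeasurable
    exact continuous_stdPhi.measurable.mul
      ((measurable_stdCdf.comp (by fun_prop)).sub (measurable_stdCdf.comp (by fun_prop)))
  · filter_upwards with x
    rw [Real.norm_eq_abs, abs_mul, abs_of_nonneg (stdPhi_nonneg x)]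
    apply mul_le_mul_of_nonneg_left _ (stdPhi_nonneg x)
    rw [abs_le]
    constructor
    · have := stdCdf_le_one (ξ - x * t); have := stdCdf_nonneg (ξ + x * t); linarith
    · have := stdCdf_le_one (ξ + x * t); have := stdCdf_nonneg (ξ - x * t); linarith

/-- Lower bound on the misclustering integral:
`∫_0^∞ φ(x)(Φ(ξ + x tan β) - Φ(ξ - x tan β)) dx ≥ 2 g(ξ) sin β cos β`. -/
theorem cluster_loss_integral_lower (ξ β : ℝ) (hξ : 0 ≤ ξ)
    (hβ0 : 0 ≤ β) (hβ : β < Real.pi / 2) :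
    2 * gFun ξ * Real.sin β * Real.cos β
      ≤ ∫ x in Set.Ioi (0 : ℝ),
          stdPhi x * (stdCdf (ξ + x * Real.tan β) - stdCdf (ξ - x * Real.tan β)) := by
  have hpi := Real.pi_pos
  set t := Real.tan β with htd
  set s := Real.sin β with hsd
  set c := Real.cos β with hcd
  have hc : 0 < c := Real.cos_pos_of_mem_Ioo ⟨by linarith, hβ⟩
  have hs0 : 0 ≤ s := Real.sin_nonneg_of_nonneg_of_le_pi hβ0 (by linarith)
  have hs : s = t * c := by
    rw [htd, Real.tan_eq_sin_div_cos, hsd, hcd]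
    field_simp
    exact (mul_div_cancel_right₀ _ hc.ne').symm
  have ht : 0 ≤ t := by rw [htd, Real.tan_eq_sin_div_cos]; exact div_nonneg hs0 hc.le
  have hsc : s ^ 2 + c ^ 2 = 1 := Real.sin_sq_add_cos_sq β
  have h1 : c ^ 2 * (1 + t ^ 2) = 1 := by nlinarith [hs, hsc]
  have hid : stdPhi 0 * stdPhi ξ = stdPhi (ξ * c) * stdPhi (ξ * s) := by
    simpa using prod_identity (ξ := ξ) hs h1 hc 0
  have hmono : ∫ x in Ioi (0:ℝ), 2 * t * x * (stdPhi x * stdPhi (ξ + x * t))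
      ≤ ∫ x in Ioi (0:ℝ), stdPhi x * (stdCdf (ξ + x * t) - stdCdf (ξ - x * t)) := by
    apply setIntegral_mono_on
    · exact (((integrable_xF ξ t).const_mul (2 * t)).congr
        (by filter_upwards with x; ring)).integrableOn
    · exact integrable_big ξ t
    · exact measurableSet_Ioi
    · exact fun x hx => pointwise_bound hξ ht hx
  have hval := exact_value (ξ := ξ) hs h1 hc hξ ht
  have step1 : 2 * gFun ξ * s * c
      ≤ 2 * s * c * (stdPhi (ξ * c) * (stdPhi (ξ * s) - ξ * s * stdCdf (-(ξ * s)))) := by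
    have e1 : stdPhi ξ ≤ stdPhi (ξ * c) := by
      apply stdPhi_le
      nlinarith [Real.cos_le_one β, hc, hξ]
    have e2 : stdPhi ξ - ξ * stdCdf (-ξ) ≤ stdPhi (ξ * s) - ξ * s * stdCdf (-(ξ * s)) := by
      have hle : ξ * s ≤ ξ := mul_le_of_le_one_right hξ (by rw [hsd]; exact Real.sin_le_one β)
      have := antitone_millsF hle
      simpa [mul_assoc] using this
    have e3 : 0 ≤ stdPhi ξ - ξ * stdCdf (-ξ) := millsF_nonneg hξ
    have hmul : stdPhi ξ * (stdPhi ξ - ξ * stdCdf (-ξ))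
        ≤ stdPhi (ξ * c) * (stdPhi (ξ * s) - ξ * s * stdCdf (-(ξ * s))) :=
      mul_le_mul e1 e2 e3 (stdPhi_nonneg _)
    have h2sc : (0:ℝ) ≤ 2 * s * c := by positivity
    calc 2 * gFun ξ * s * c = 2 * s * c * (stdPhi ξ * (stdPhi ξ - ξ * stdCdf (-ξ))) := by
          unfold gFun; ring
      _ ≤ 2 * s * c * (stdPhi (ξ * c) * (stdPhi (ξ * s) - ξ * s * stdCdf (-(ξ * s)))) :=
          mul_le_mul_of_nonneg_left hmul h2sc
  have step2 : 2 * s * c * (stdPhi (ξ * c) * (stdPhi (ξ * s) - ξ * s * stdCdf (-(ξ * s))))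
      = 2 * t * c ^ 2 * (stdPhi 0 * stdPhi ξ)
        - 2 * ξ * t ^ 2 * c ^ 3 * (stdPhi (ξ * c) * stdCdf (-(ξ * s))) := by
    rw [hid, hs]
    ring
  calc 2 * gFun ξ * s * c
      ≤ 2 * s * c * (stdPhi (ξ * c) * (stdPhi (ξ * s) - ξ * s * stdCdf (-(ξ * s)))) := step1
    _ = ∫ x in Ioi (0:ℝ), 2 * t * x * (stdPhi x * stdPhi (ξ + x * t)) := by
        rw [hval, step2]
    _ ≤ _ := hmono
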